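/- arXiv:1112.2844 — 4 statements merged into one kernel-verified Lean document; each statement's English description precedes it below -/
import Mathlib

section
/- For every real number α and all natural numbers n and m, applying the matrix (U_a(α))^m · U_c · (U_a(α))^n to the standard basis vector e₀ of ℝ⁴ yields the vector cos((n−m)α)·e₂ + sin((n−m)α)·e₃. -/
open Real Matrix

/-- The matrix `U_a(α)` from the paper. -/
noncomputable def Ua (α : ℝ) : Matrix (Fin 4) (Fin 4) ℝ :=
  !![Real.cos α, -Real.sin α, 0, 0;
     Real.sin α,  Real.cos α, 0, 0;
     0, 0,  Real.cos α, Real.sin α;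
     0, 0, -Real.sin α, Real.cos α]

/-- The matrix `U_c` from the paper. -/
def Uc : Matrix (Fin 4) (Fin 4) ℝ :=
  !![0, 0, 1, 0;
     0, 0, 0, 1;
     1, 0, 0, 0;
     0, 1, 0, 0]

/-- The standard basis vectors of `ℝ⁴`. -/
noncomputable def e (i : Fin 4) : Fin 4 → ℝ := Pi.single i 1

lemma Ua_mul (α β : ℝ) : Ua α * Ua β = Ua (α + β) := by
  ext i j
  fin_cases i <;> fin_cases j <;>
    simp [Ua, Matrix.mul_apply, Fin.sum_univ_four, Real.cos_add, Real.sin_add, Matrix.vecHead, Matrix.vecTail] <;> ring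

lemma Ua_pow (α : ℝ) (k : ℕ) : Ua α ^ k = Ua (k * α) := by
  induction k with
  | zero =>
      ext i j
      fin_cases i <;> fin_cases j <;> simp [Ua, Matrix.vecHead, Matrix.vecTail]
  | succ k ih =>
      rw [pow_succ, ih, Ua_mul]
      push_cast
      ring_nf

theorem Ua_pow_Uc_Ua_pow_mulVec (α : ℝ) (n m : ℕ) :
    ((Ua α) ^ m * Uc * (Ua α) ^ n).mulVec (e 0) =
      Real.cos (((n : ℝ) - m) * α) • e 2 + Real.sin (((n : ℝ) - m) * α) • e 3 := by
  rw [Ua_pow, Ua_pow]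
  have hc : Real.cos (((n : ℝ) - m) * α) =
      Real.cos (m * α) * Real.cos (n * α) + Real.sin (m * α) * Real.sin (n * α) := by
    rw [sub_mul, Real.cos_sub]; ring
  have hs : Real.sin (((n : ℝ) - m) * α) =
      Real.cos (m * α) * Real.sin (n * α) - Real.sin (m * α) * Real.cos (n * α) := by
    rw [sub_mul, Real.sin_sub]; ring
  funext i
  fin_cases i <;>
    simp [Ua, Uc, e, Matrix.mulVec, Matrix.mul_apply, dotProduct, Fin.sum_univ_four,
      Pi.single_apply, hc, hs] <;> ring
end

section
/- For every nonzero integer d, the inequality sin²(√2 · d · π) > 1/(2d² + 1) holds. -/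
open Real

set_option maxHeartbeats 2000000

private lemma key (m : ℤ) (hm : 0 < m) :
    Real.sin (Real.sqrt 2 * m * Real.pi) ^ 2 > 1 / (2 * (m : ℝ) ^ 2 + 1) := by
  set s : ℝ := Real.sqrt 2 with hs
  set D : ℝ := (m : ℝ) with hDdef
  have hm1 : (1:ℤ) ≤ m := hm
  have hD : 1 ≤ D := by rw [hDdef]; exact_mod_cast hm1
  have hs2 : s ^ 2 = 2 := Real.sq_sqrt (by norm_num)
  have hs0 : 0 < s := Real.sqrt_pos.2 (by norm_num)
  have hsl : 1.414 ≤ s := by nlinarith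
  have hsu : s ≤ 1.415 := by nlinarith
  set n : ℤ := round (s * D) with hn
  set N : ℝ := (n : ℝ) with hNdef
  clear_value N
  clear_value n
  clear_value D
  have hs' : Real.sqrt 2 = s := hs.symm
  clear_value s
  have hround : |s * D - N| ≤ 1 / 2 := by rw [hNdef, hn]; exact abs_sub_round (s * D)
  obtain ⟨hr1, hr2⟩ := abs_le.1 hround
  have hsD : 1.414 ≤ s * D := le_trans hsl (le_mul_of_one_le_right (by linarith) hD)
  have hN0 : 0 < N := by linarith
  have hn0 : 0 < n := by rw [hNdef, Int.cast_pos] at hN0; exact hN0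
  have hpi := Real.pi_gt_d6
  have hpi2 : π < 3.1416 := Real.pi_lt_d4
  -- the integer 2 m^2 - n^2 is nonzero
  have hne : 2 * m ^ 2 - n ^ 2 ≠ 0 := by
    intro h
    have hNsq : N ^ 2 = 2 * D ^ 2 := by
      have h2 : (2 * m ^ 2 : ℤ) = n ^ 2 := by omega
      have h3 := congrArg (fun z : ℤ => (z : ℝ)) h2
      push_cast at h3
      rw [hNdef, hDdef]
      linarith
    have heq : s * D = N := by nlinarith
    have hD0 : D ≠ 0 := by linarith
    refine irrational_sqrt_two ⟨(n : ℚ) / (m : ℚ), ?_⟩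
    push_cast
    rw [hs', ← hNdef, ← hDdef, div_eq_iff hD0]
    linarith
  have habs : (1 : ℝ) ≤ |2 * D ^ 2 - N ^ 2| := by
    have h1 : (1 : ℤ) ≤ |2 * m ^ 2 - n ^ 2| := Int.one_le_abs hne
    have : ((1 : ℤ) : ℝ) ≤ |((2 * m ^ 2 - n ^ 2 : ℤ) : ℝ)| := by
      rw [← Int.cast_abs]; exact_mod_cast h1
    push_cast at this
    rw [hNdef, hDdef]
    exact this
  set ε : ℝ := s * D - N with hε
  clear_value ε
  have hfac : ε * (s * D + N) = 2 * D ^ 2 - N ^ 2 := by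
    have : (s * D) ^ 2 = 2 * D ^ 2 := by nlinarith
    nlinarith [this]
  have hsum : 0 < s * D + N := by linarith
  have habsε : 1 / (s * D + N) ≤ |ε| := by
    rw [div_le_iff₀ hsum]
    calc (1:ℝ) ≤ |2 * D ^ 2 - N ^ 2| := habs
      _ = |ε| * |s * D + N| := by rw [← abs_mul, hfac]
      _ = |ε| * (s * D + N) := by rw [abs_of_pos hsum]
  have hNub : N ≤ s * D + 1 / 2 := by linarith
  set A : ℝ := 2 * s * D + 1 / 2 with hA
  clear_value A
  have hA0 : (3.328 : ℝ) ≤ A := by rw [hA]; linarith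
  have hεlb : 1 / A ≤ |ε| := le_trans (by
    apply one_div_le_one_div_of_le hsum; linarith) habsε
  -- reduce sin squared
  have hsin_eq : Real.sin (s * D * π) ^ 2 = Real.sin (|ε| * π) ^ 2 := by
    have h1 : s * D * π = ε * π + n * π := by rw [hε, hNdef]; push_cast; ring
    rw [h1, Real.sin_add_int_mul_pi]
    have h2 : ((-1 : ℝ) ^ n) ^ 2 = 1 := by
      rcases Int.even_or_odd n with he | ho
      · rw [he.neg_one_zpow]; norm_num
      · rw [ho.neg_one_zpow]; norm_num
    rw [mul_pow, h2, one_mul]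
    rcases abs_cases ε with ⟨h, _⟩ | ⟨h, _⟩
    · rw [h]
    · rw [h, neg_mul, Real.sin_neg, neg_pow]; norm_num
  set y : ℝ := π / A with hy
  clear_value y
  have hApos : 0 < A := by linarith
  have hy0 : 0 < y := by rw [hy]; exact div_pos (by linarith) hApos
  have hyA : y * A = π := by rw [hy]; exact div_mul_cancel₀ _ (ne_of_gt hApos)
  have hy1 : y ≤ 0.945 := by
    rw [hy, div_le_iff₀ hApos]
    nlinarith [mul_le_mul_of_nonneg_left hA0 (by norm_num : (0:ℝ) ≤ 0.945)]
  have hx2 : |ε| * π ≤ π / 2 := by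
    have h : |ε| ≤ 1 / 2 := hround
    have := mul_le_mul_of_nonneg_right h (by linarith : (0:ℝ) ≤ π)
    linarith
  have hyx : y ≤ |ε| * π := by
    rw [hy, div_le_iff₀ hApos]
    calc π = 1 / A * π * A := by field_simp
      _ ≤ |ε| * π * A := by
          apply mul_le_mul_of_nonneg_right _ (le_of_lt hApos)
          exact mul_le_mul_of_nonneg_right hεlb (by linarith)
  have hsinmono : Real.sin y ≤ Real.sin (|ε| * π) :=
    Real.sin_le_sin_of_le_of_le_pi_div_two (by linarith) hx2 hyx
  have hycube : y - y ^ 3 / 4 < Real.sin y := by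
    have := Real.sin_gt_sub_cube hy0; linarith [pow_pos hy0 3]
  have hlb : 0.776 * y ≤ y - y ^ 3 / 4 := by
    have hyy : y * y ≤ 0.893025 := by nlinarith [mul_le_mul hy1 hy1 hy0.le (by norm_num : (0:ℝ) ≤ 0.945)]
    nlinarith [mul_le_mul_of_nonneg_left hyy hy0.le]
  have hlb0 : 0 < 0.776 * y := by linarith
  have hfinal : 1 / (2 * D ^ 2 + 1) < (0.776 * y) ^ 2 := by
    rw [div_lt_iff₀ (by positivity)]
    have h1 : 3.1415 < y * A := by rw [hyA]; linarith [Real.pi_gt_d4]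
    have h2 : A ^ 2 = 8 * D ^ 2 + 2 * s * D + 1 / 4 := by
      rw [hA]; linear_combination (4 * D ^ 2) * hs2
    have hsD2 : s * D ≤ 1.415 * D := by
      have := mul_le_mul_of_nonneg_right hsu (by linarith : (0:ℝ) ≤ D)
      linarith
    have hDD : D ≤ D * D := le_mul_of_one_le_left (by linarith) hD
    have key2 : A ^ 2 < 5.9 * (2 * D ^ 2 + 1) := by linarith [h2, hsD2, hDD]
    have h5 : 5.9 < 0.602176 * (y * A) ^ 2 := by linarith [sq_nonneg (y * A - 3.1415), h1]
    have h6 : 1 * A ^ 2 < ((0.776 * y) ^ 2 * (2 * D ^ 2 + 1)) * A ^ 2 := by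
      have hq : ((0.776 * y) ^ 2 * (2 * D ^ 2 + 1)) * A ^ 2
          = (0.602176 * (y * A) ^ 2) * (2 * D ^ 2 + 1) := by ring
      rw [hq, one_mul]
      linarith [mul_lt_mul_of_pos_right h5 (show (0:ℝ) < 2 * D ^ 2 + 1 by positivity), key2]
    exact lt_of_mul_lt_mul_right h6 (sq_nonneg A)
  have hchain : 0.776 * y ≤ Real.sin (|ε| * π) := by linarith
  calc 1 / (2 * D ^ 2 + 1) < (0.776 * y) ^ 2 := hfinal
    _ ≤ Real.sin (|ε| * π) ^ 2 := by exact pow_le_pow_left₀ hlb0.le hchain 2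
    _ = Real.sin (s * D * π) ^ 2 := hsin_eq.symm

theorem sin_sq_sqrt_two_mul_int_gt (d : ℤ) (hd : d ≠ 0) :
    Real.sin (Real.sqrt 2 * d * Real.pi) ^ 2 > 1 / (2 * (d : ℝ) ^ 2 + 1) := by
  rcases lt_or_gt_of_ne hd with h | h
  · have := key (-d) (by omega)
    push_cast at this
    rw [show Real.sqrt 2 * (-(d:ℝ)) * π = -(Real.sqrt 2 * (d:ℝ) * π) by ring,
      Real.sin_neg, neg_pow] at this
    simpa using this
  · exact key d h
end

section
/- Let k ≥ 1 and n ≥ 0 be natural numbers, and set P_r = 2^{−k(2n+2)} and P_a = (1 − P_r)·2^{−k(2n+1)}. Then P_a(1−P_r)/(P_a + P_r − P_a·P_r) ≥ 1/(1 + 2^{2−k}). (In particular, this acceptance probability tends to 1 as k grows.) -/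
open Real

theorem accept_prob_ge (k n : ℕ) (hk : 1 ≤ k) :
    let Pr : ℝ := (2 : ℝ) ^ (-(k * (2 * n + 2) : ℝ))
    let Pa : ℝ := (1 - Pr) * (2 : ℝ) ^ (-(k * (2 * n + 1) : ℝ))
    Pa * (1 - Pr) / (Pa + Pr - Pa * Pr) ≥ 1 / (1 + (2 : ℝ) ^ ((2 : ℝ) - k)) := by
  intro Pr Pa
  set t : ℝ := (2 : ℝ) ^ (-(k * (2 * n + 1) : ℝ)) with ht
  set u : ℝ := (2 : ℝ) ^ (-(k : ℝ)) with hu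
  have h2 : (0:ℝ) < 2 := by norm_num
  have htpos : 0 < t := Real.rpow_pos_of_pos h2 _
  have hupos : 0 < u := Real.rpow_pos_of_pos h2 _
  have ht1 : t ≤ 1 := by
    rw [ht]
    apply Real.rpow_le_one_of_one_le_of_nonpos (by norm_num)
    have : (0:ℝ) ≤ (k : ℝ) * (2 * n + 1) := by positivity
    linarith
  have hu1 : u ≤ 1/2 := by
    rw [hu]
    have : (2:ℝ) ^ (-(k : ℝ)) ≤ (2:ℝ) ^ (-(1:ℝ)) := by
      apply Real.rpow_le_rpow_of_exponent_le (by norm_num)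
      have : (1:ℝ) ≤ (k:ℝ) := by exact_mod_cast hk
      linarith
    calc (2:ℝ) ^ (-(k : ℝ)) ≤ (2:ℝ) ^ (-(1:ℝ)) := this
      _ = 1/2 := by rw [Real.rpow_neg_one]; norm_num
  have hPr : Pr = t * u := by
    simp only [Pr, ht, hu]
    rw [← Real.rpow_add h2]
    ring_nf
  have h4u : (2 : ℝ) ^ ((2 : ℝ) - (k:ℝ)) = 4 * u := by
    rw [hu, sub_eq_add_neg, Real.rpow_add h2]
    norm_num
  have hPa : Pa = (1 - t * u) * t := by simp only [Pa, hPr, ht]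
  have htu : t * u ≤ 1/2 := by nlinarith
  have h12 : 0 ≤ 1 - 2*(t*u) := by linarith
  have h32 : 0 ≤ 3 - 2*(t*u) := by linarith
  have hD : 0 < (1 - t*u) * t + t*u - (1 - t*u) * t * (t*u) := by
    have h1 : 0 < t * (1 - t*u) := by nlinarith
    have h2' : 0 ≤ t*u * (1 - t*(1 - t*u)) := by nlinarith [mul_nonneg (mul_nonneg htpos.le htpos.le) hupos.le, mul_pos htpos hupos]
    nlinarith
  rw [hPr, hPa, h4u, ge_iff_le, div_le_div_iff₀ (by positivity) hD]
  nlinarith [mul_nonneg (mul_nonneg (mul_nonneg htpos.le hupos.le) h12) h32]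
end

section
/- Let k ≥ 1 and l ≥ 1 be natural numbers, and let P_a and P_r be real numbers with 0 < P_a ≤ 2^{−k·l} and 2^{−k(l−1)−1} ≤ P_r ≤ 1. Then P_r/(P_a + P_r − P_a·P_r) ≥ 1/(1 + 2^{−(k−1)}). (In particular, this rejection probability tends to 1 as k grows.) -/
open Real

theorem reject_prob_ge (k l : ℕ) (hk : 1 ≤ k) (hl : 1 ≤ l) (Pa Pr : ℝ)
    (ha : 0 < Pa) (ha' : Pa ≤ (2 : ℝ) ^ (-(k * l : ℝ)))
    (hr : (2 : ℝ) ^ (-(k * (l - 1) : ℝ) - 1) ≤ Pr) (hr' : Pr ≤ 1) :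
    Pr / (Pa + Pr - Pa * Pr) ≥ 1 / (1 + (2 : ℝ) ^ (-((k : ℝ) - 1))) := by
  have hPr : (0:ℝ) < Pr := lt_of_lt_of_le (by positivity) hr
  have hD : 0 < Pa + Pr - Pa * Pr := by nlinarith [mul_nonneg ha.le (sub_nonneg.2 hr')]
  have hc : (0:ℝ) < (2 : ℝ) ^ (-((k : ℝ) - 1)) := by positivity
  rw [ge_iff_le, div_le_div_iff₀ (by positivity) hD]
  have key : (2:ℝ) ^ (-(k*l:ℝ)) ≤ Pr * (2:ℝ) ^ (-((k:ℝ)-1)) := by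
    have h1 : (2:ℝ) ^ (-(k*l:ℝ))
        = (2:ℝ) ^ (-(k * (l - 1) : ℝ) - 1) * (2:ℝ) ^ (-((k:ℝ)-1)) := by
      rw [← Real.rpow_add (by norm_num)]
      ring_nf
    rw [h1]
    exact mul_le_mul_of_nonneg_right hr hc.le
  nlinarith [mul_nonneg ha.le hPr.le]
end
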